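/- Let δ ∈ ℤ₂[[x]] be a power series with constant coefficient δ(0) = 0, and set s := 1 + 4δ ∈ ℤ₂[[x]]. Suppose s has radius of convergence equal to 1, i.e. there is no real r > 1 such that the coefficients c_n of s satisfy ‖c_n‖₂ · r^n → 0. Then for every integer q ≥ 1 the power series s^q also has radius of convergence equal to 1: there is no real r > 1 such that the coefficients of s^q, multiplied by r^n, tend to 0. -/

import Mathlib

open PowerSeries Filter Finset

lemma h4C : (4 : PowerSeries ℤ_[2]) = PowerSeries.C (R := ℤ_[2]) 4 := (map_ofNat (PowerSeries.C (R := ℤ_[2])) 4).symm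

lemma norm_two' : ‖(2:ℤ_[2])‖ = 2⁻¹ := by
  have := @PadicInt.norm_p 2 _
  simpa using this

lemma norm_four : ‖(4:ℤ_[2])‖ = 4⁻¹ := by
  have : (4:ℤ_[2]) = 2*2 := by norm_num
  rw [this, norm_mul, norm_two']; norm_num

lemma expand (δ : PowerSeries ℤ_[2]) (q : ℕ) (hq : 1 ≤ q) :
    (1 + 4 * δ) ^ q
      = 1 + ∑ k ∈ Finset.Ico 1 (q + 1),
          PowerSeries.C (R := ℤ_[2]) ((4:ℤ_[2]) ^ k * (q.choose k : ℤ_[2])) * δ ^ k := by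
  rw [add_comm (1 : PowerSeries ℤ_[2]) (4 * δ), add_pow]
  have hterm : ∀ k, (4*δ)^k * (1:PowerSeries ℤ_[2])^(q-k) * (q.choose k : PowerSeries ℤ_[2])
      = PowerSeries.C (R := ℤ_[2]) ((4:ℤ_[2])^k * (q.choose k : ℤ_[2])) * δ^k := by
    intro k
    rw [one_pow, mul_one, mul_pow, h4C, ← map_pow, ← map_natCast (PowerSeries.C (R := ℤ_[2])) (q.choose k),
      mul_right_comm, ← map_mul]
  rw [Finset.sum_congr rfl fun k _ => hterm k, Finset.range_eq_Ico,
    Finset.sum_eq_sum_Ico_succ_bot (by omega : 0 < q+1)]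
  simp

lemma pow_bound (δ : PowerSeries ℤ_[2]) (hδ0 : PowerSeries.constantCoeff δ = 0)
    {ρ : ℝ} (hρ0 : 0 ≤ ρ) (hρ1 : ρ ≤ 1) (N n : ℕ)
    (H : ∀ m, m < n → ‖PowerSeries.coeff m δ‖ ≤ ρ ^ (m - N)) :
    ∀ k, 1 ≤ k → ∀ j ≤ n, (j < n ∨ 2 ≤ k) →
      ‖PowerSeries.coeff j (δ^k)‖ ≤ ρ ^ (j - k*N) := by
  intro k hk
  induction k, hk using Nat.le_induction with
  | base =>
    intro j hj hcase
    rcases hcase with h | h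
    · simpa using H j h
    · omega
  | succ k hk IH =>
    intro j hj _
    rw [pow_succ', PowerSeries.coeff_mul]
    apply IsUltrametricDist.norm_sum_le_of_forall_le_of_nonneg (pow_nonneg hρ0 _)
    intro p hp
    rw [Finset.HasAntidiagonal.mem_antidiagonal] at hp
    rcases Nat.eq_zero_or_pos p.1 with h1 | h1
    · rw [h1, PowerSeries.coeff_zero_eq_constantCoeff, hδ0, zero_mul, norm_zero]
      exact pow_nonneg hρ0 _
    rcases eq_or_lt_of_le (show p.1 ≤ n by omega) with h2 | h2
    · have hp2 : p.2 = 0 := by omega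
      have : PowerSeries.coeff p.2 (δ^k) = 0 := by
        rw [hp2, PowerSeries.coeff_zero_eq_constantCoeff, map_pow, hδ0, zero_pow (by omega)]
      rw [this, mul_zero, norm_zero]
      exact pow_nonneg hρ0 _
    · have hb : p.2 < n := by omega
      calc ‖PowerSeries.coeff p.1 δ * PowerSeries.coeff p.2 (δ^k)‖
          = ‖PowerSeries.coeff p.1 δ‖ * ‖PowerSeries.coeff p.2 (δ^k)‖ :=
            norm_mul _ _
        _ ≤ ρ ^ (p.1 - N) * ρ ^ (p.2 - k*N) :=
            mul_le_mul (H p.1 h2) (IH p.2 (by omega) (Or.inl hb)) (norm_nonneg _) (pow_nonneg hρ0 _)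
        _ = ρ ^ ((p.1 - N) + (p.2 - k*N)) := (pow_add ρ _ _).symm
        _ ≤ ρ ^ (j - (k+1)*N) := by
            apply pow_le_pow_of_le_one hρ0 hρ1
            have hM : (k+1)*N = N + k*N := by ring
            omega

lemma core (δ : PowerSeries ℤ_[2]) (hδ0 : PowerSeries.constantCoeff δ = 0)
    (q : ℕ) (hq : 1 ≤ q) (hqn : (2:ℝ)⁻¹ ≤ ‖(q : ℤ_[2])‖) {r : ℝ} (hr : 1 < r)
    (h : Filter.Tendsto (fun n => ‖PowerSeries.coeff n ((1+4*δ)^q)‖ * r ^ n)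
      Filter.atTop (nhds 0)) :
    ∃ r' : ℝ, 1 < r' ∧ Filter.Tendsto (fun n => ‖PowerSeries.coeff n (1+4*δ)‖ * r' ^ n)
      Filter.atTop (nhds 0) := by
  have hr0 : (0:ℝ) < r := lt_trans one_pos hr
  set σ : ℝ := r⁻¹ with hσ
  have hσ0 : 0 < σ := by positivity
  have hσ1 : σ < 1 := inv_lt_one_of_one_lt₀ hr
  -- bound B
  obtain ⟨N₁, hN₁⟩ : ∃ N₁, ∀ n ≥ N₁, ‖PowerSeries.coeff n ((1+4*δ)^q)‖ * r ^ n ≤ 1 := by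
    have := h.eventually_le_const (show (0:ℝ) < 1 by norm_num)
    rw [eventually_atTop] at this
    obtain ⟨N₁, hN₁⟩ := this
    exact ⟨N₁, fun n hn => hN₁ n hn⟩
  set B : ℝ := r ^ N₁ with hB
  have hB1 : 1 ≤ B := one_le_pow₀ hr.le
  have hB0 : 0 < B := lt_of_lt_of_le one_pos hB1
  have hcoef : ∀ n, ‖PowerSeries.coeff n ((1+4*δ)^q)‖ ≤ B * σ ^ n := by
    intro n
    rcases le_or_gt N₁ n with hn | hn
    · have h1 := hN₁ n hn
      have h2 : ‖PowerSeries.coeff n ((1+4*δ)^q)‖ ≤ σ ^ n := by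
        rw [hσ, inv_pow]
        rw [← le_div_iff₀ (by positivity : (0:ℝ) < r^n)] at h1
        simpa [one_div] using h1
      calc ‖PowerSeries.coeff n ((1+4*δ)^q)‖ ≤ σ^n := h2
        _ ≤ B * σ^n := le_mul_of_one_le_left (by positivity) hB1
    · calc ‖PowerSeries.coeff n ((1+4*δ)^q)‖ ≤ 1 := PadicInt.norm_le_one _
        _ ≤ B * σ ^ n := by
            rw [hB, hσ, inv_pow, ← div_eq_mul_inv, le_div_iff₀ (by positivity : (0:ℝ) < r^n),
              one_mul]
            exact pow_le_pow_right₀ hr.le hn.le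
  -- τ
  set τ : ℝ := Real.sqrt σ with hτ
  have hτ0 : 0 < τ := Real.sqrt_pos.mpr hσ0
  have hτ1 : τ < 1 := by
    rw [hτ, show (1:ℝ) = Real.sqrt 1 by simp]
    exact Real.sqrt_lt_sqrt hσ0.le hσ1
  have hττ : τ * τ = σ := Real.mul_self_sqrt hσ0.le
  -- N
  obtain ⟨N, hN1, hNle⟩ : ∃ N : ℕ, 1 ≤ N ∧ ∀ n ≥ N, τ^n ≤ 1/(8*B) := by
    have ht := tendsto_pow_atTop_nhds_zero_of_lt_one hτ0.le hτ1
    have := ht.eventually_le_const (show (0:ℝ) < 1/(8*B) by positivity)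
    rw [eventually_atTop] at this
    obtain ⟨N₀, hN₀⟩ := this
    exact ⟨max N₀ 1, le_max_right _ _, fun n hn => hN₀ n (le_trans (le_max_left _ _) hn)⟩
  -- ρ
  set ρ : ℝ := max τ ((2:ℝ) ^ (-(N:ℝ)⁻¹)) with hρ
  have hρτ : τ ≤ ρ := le_max_left _ _
  have hρ0 : 0 < ρ := lt_of_lt_of_le hτ0 hρτ
  have hρ1 : ρ < 1 := by
    apply max_lt hτ1
    apply Real.rpow_lt_one_of_one_lt_of_neg one_lt_two
    have : (0:ℝ) < (N:ℝ)⁻¹ := by positivity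
    linarith
  have hρN : (2:ℝ)⁻¹ ≤ ρ ^ N := by
    have heq : ((2:ℝ) ^ (-(N:ℝ)⁻¹))^N = 2⁻¹ := by
      rw [← Real.rpow_natCast ((2:ℝ)^(-(N:ℝ)⁻¹)) N, ← Real.rpow_mul (by norm_num)]
      rw [neg_mul, inv_mul_cancel₀ (by positivity : (N:ℝ) ≠ 0)]
      rw [Real.rpow_neg_one]
    rw [← heq]
    exact pow_le_pow_left₀ (Real.rpow_nonneg (by norm_num) _) (le_max_right _ _) N
  -- main claim
  have main : ∀ n, ‖PowerSeries.coeff n δ‖ ≤ ρ ^ (n - N) := by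
    intro n
    induction n using Nat.strong_induction_on with
    | _ n IH =>
    rcases le_or_gt n N with hn | hn
    · rw [Nat.sub_eq_zero_of_le hn, pow_zero]
      exact PadicInt.norm_le_one _
    -- n > N ≥ 1
    have hn1 : 1 ≤ n := by omega
    -- identity
    have hexp := expand δ q hq
    rw [Finset.sum_eq_sum_Ico_succ_bot (by omega : 1 < q+1)] at hexp
    set E : PowerSeries ℤ_[2] :=
      ∑ k ∈ Finset.Ico 2 (q + 1),
        PowerSeries.C (R := ℤ_[2]) ((4:ℤ_[2]) ^ k * (q.choose k : ℤ_[2])) * δ ^ k with hE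
    have hid : PowerSeries.coeff n ((1+4*δ)^q)
        = (4:ℤ_[2])^1 * (q.choose 1 : ℤ_[2]) * PowerSeries.coeff n δ
          + PowerSeries.coeff n E := by
      rw [hexp, map_add, map_add, PowerSeries.coeff_one, if_neg (by omega),
        PowerSeries.coeff_C_mul, pow_one δ, zero_add]
    have hsub : (4:ℤ_[2])^1 * (q.choose 1 : ℤ_[2]) * PowerSeries.coeff n δ
        = PowerSeries.coeff n ((1+4*δ)^q) - PowerSeries.coeff n E := by
      rw [hid]; ring
    -- bound on E
    have hEbd : ‖PowerSeries.coeff n E‖ ≤ 8⁻¹ * ρ ^ (n - N) := by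
      rw [hE, map_sum]
      apply IsUltrametricDist.norm_sum_le_of_forall_le_of_nonneg (by positivity)
      intro k hk
      rw [Finset.mem_Ico] at hk
      have hk2 : 2 ≤ k := hk.1
      rw [PowerSeries.coeff_C_mul]
      have hpow : ‖PowerSeries.coeff n (δ^k)‖ ≤ ρ ^ (n - k*N) :=
        pow_bound δ hδ0 hρ0.le hρ1.le N n (fun m hm => IH m hm) k (by omega) n le_rfl (Or.inr hk2)
      have hnorm4 : ‖(4:ℤ_[2])^k * (q.choose k : ℤ_[2])‖ ≤ (4:ℝ)⁻¹ ^ k := by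
        rw [norm_mul, norm_pow, norm_four]
        calc ((4:ℝ)⁻¹)^k * ‖(q.choose k : ℤ_[2])‖ ≤ ((4:ℝ)⁻¹)^k * 1 :=
              mul_le_mul_of_nonneg_left (PadicInt.norm_le_one _) (by positivity)
          _ = ((4:ℝ)⁻¹)^k := mul_one _
      calc ‖(4:ℤ_[2])^k * (q.choose k : ℤ_[2]) * PowerSeries.coeff n (δ^k)‖
          = ‖(4:ℤ_[2])^k * (q.choose k : ℤ_[2])‖ * ‖PowerSeries.coeff n (δ^k)‖ :=
            norm_mul _ _
        _ ≤ (4:ℝ)⁻¹^k * ρ^(n - k*N) :=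
            mul_le_mul hnorm4 hpow (norm_nonneg _) (by positivity)
        _ ≤ 8⁻¹ * ρ ^ (n - N) := by
            -- ρ^(n-k*N) ≤ ρ^(n-N) * 2^(k-1)
            have e1 : ρ^(n - k*N) * ρ^((k-1)*N) ≤ ρ^(n-N) := by
              rw [← pow_add]
              apply pow_le_pow_of_le_one hρ0.le hρ1.le
              have : k*N = N + (k-1)*N := by
                have : k = 1 + (k-1) := by omega
                nth_rewrite 1 [this]; ring
              omega
            have e2 : ((2:ℝ)⁻¹)^(k-1) ≤ ρ^((k-1)*N) := by
              rw [mul_comm, pow_mul]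
              exact pow_le_pow_left₀ (by norm_num) hρN (k-1)
            have e3 : ρ^(n - k*N) ≤ ρ^(n-N) * ((2:ℝ)^(k-1)) := by
              rw [← le_div_iff₀ (by positivity : (0:ℝ) < ρ^((k-1)*N))] at e1
              calc ρ^(n-k*N) ≤ ρ^(n-N) / ρ^((k-1)*N) := e1
                _ ≤ ρ^(n-N) / ((2:ℝ)⁻¹)^(k-1) := by
                    apply div_le_div_of_nonneg_left (by positivity) (by positivity) e2
                _ = ρ^(n-N) * ((2:ℝ)^(k-1)) := by
                    rw [div_eq_mul_inv, ← inv_pow, inv_inv]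
            calc (4:ℝ)⁻¹^k * ρ^(n - k*N) ≤ (4:ℝ)⁻¹^k * (ρ^(n-N) * 2^(k-1)) :=
                  mul_le_mul_of_nonneg_left e3 (by positivity)
              _ = ((4:ℝ)⁻¹^k * 2^(k-1)) * ρ^(n-N) := by ring
              _ ≤ 8⁻¹ * ρ^(n-N) := by
                  apply mul_le_mul_of_nonneg_right _ (by positivity)
                  have h2k : (2:ℝ)^(k-1) * 2^(k+1) = 4^k := by
                    rw [← pow_add, show (4:ℝ) = 2^2 by norm_num, ← pow_mul]
                    congr 1
                    omega
                  have : (4:ℝ)⁻¹^k * 2^(k-1) = (2:ℝ)⁻¹^(k+1) := by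
                    rw [inv_pow, inv_pow, inv_mul_eq_div, ← one_div ((2:ℝ)^(k+1)),
                      div_eq_div_iff (by positivity) (by positivity)]
                    linarith [h2k]
                  rw [this]
                  calc ((2:ℝ)⁻¹)^(k+1) ≤ ((2:ℝ)⁻¹)^3 :=
                        pow_le_pow_of_le_one (by norm_num) (by norm_num) (by omega)
                    _ = 8⁻¹ := by norm_num
    -- bound on coeff of (1+4δ)^q
    have hqbd : ‖PowerSeries.coeff n ((1+4*δ)^q)‖ ≤ 8⁻¹ * ρ ^ (n - N) := by
      have h1 : B * σ^n ≤ 8⁻¹ * τ^n := by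
        have : τ^n ≤ 1/(8*B) := hNle n hn.le
        calc B * σ^n = B * τ^n * τ^n := by rw [← hττ]; ring
          _ ≤ B * (1/(8*B)) * τ^n := by
              apply mul_le_mul_of_nonneg_right _ (by positivity)
              exact mul_le_mul_of_nonneg_left this hB0.le
          _ = 8⁻¹ * τ^n := by
              have hBne : B ≠ 0 := ne_of_gt hB0
              field_simp
      have h2 : τ^n ≤ ρ^(n-N) := by
        calc τ^n ≤ τ^(n-N) := pow_le_pow_of_le_one hτ0.le hτ1.le (by omega)
          _ ≤ ρ^(n-N) := pow_le_pow_left₀ hτ0.le hρτ _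
      calc ‖PowerSeries.coeff n ((1+4*δ)^q)‖ ≤ B * σ^n := hcoef n
        _ ≤ 8⁻¹ * τ^n := h1
        _ ≤ 8⁻¹ * ρ^(n-N) := by linarith
    -- combine
    have hmax : ‖(4:ℤ_[2])^1 * (q.choose 1 : ℤ_[2]) * PowerSeries.coeff n δ‖
        ≤ 8⁻¹ * ρ ^ (n - N) := by
      rw [hsub, sub_eq_add_neg]
      calc ‖PowerSeries.coeff n ((1+4*δ)^q) + -PowerSeries.coeff n E‖
          ≤ max ‖PowerSeries.coeff n ((1+4*δ)^q)‖ ‖-PowerSeries.coeff n E‖ :=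
            PadicInt.nonarchimedean _ _
        _ ≤ 8⁻¹ * ρ ^ (n - N) := by
            rw [norm_neg]
            exact max_le hqbd hEbd
    have hql : ‖(4:ℤ_[2])^1 * (q.choose 1 : ℤ_[2])‖ * ‖PowerSeries.coeff n δ‖
        ≤ 8⁻¹ * ρ ^ (n - N) := by
      rw [← norm_mul]; exact hmax
    have hqn' : (8:ℝ)⁻¹ ≤ ‖(4:ℤ_[2])^1 * (q.choose 1 : ℤ_[2])‖ := by
      rw [norm_mul, norm_pow, norm_four, pow_one, Nat.choose_one_right]
      calc (8:ℝ)⁻¹ = 4⁻¹ * 2⁻¹ := by norm_num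
        _ ≤ 4⁻¹ * ‖(q : ℤ_[2])‖ := mul_le_mul_of_nonneg_left hqn (by norm_num)
    have := calc (8:ℝ)⁻¹ * ‖PowerSeries.coeff n δ‖
        ≤ ‖(4:ℤ_[2])^1 * (q.choose 1 : ℤ_[2])‖ * ‖PowerSeries.coeff n δ‖ :=
          mul_le_mul_of_nonneg_right hqn' (norm_nonneg _)
      _ ≤ 8⁻¹ * ρ ^ (n - N) := hql
    linarith
  -- conclusion
  have hρinv : 1 < ρ⁻¹ := (one_lt_inv₀ hρ0).mpr hρ1
  refine ⟨(1 + ρ⁻¹)/2, by linarith, ?_⟩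
  have hr'lt : (1 + ρ⁻¹)/2 < ρ⁻¹ := by linarith
  have hr'pos : 0 < (1 + ρ⁻¹)/2 := by linarith
  have hmix : ρ * ((1 + ρ⁻¹)/2) < 1 := by
    calc ρ * ((1 + ρ⁻¹)/2) < ρ * ρ⁻¹ := by
          exact mul_lt_mul_of_pos_left hr'lt hρ0
      _ = 1 := mul_inv_cancel₀ (ne_of_gt hρ0)
  have hmix0 : 0 ≤ ρ * ((1 + ρ⁻¹)/2) := by positivity
  have hbound : ∀ n, ‖PowerSeries.coeff n (1+4*δ)‖ * ((1 + ρ⁻¹)/2) ^ n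
      ≤ (ρ^N)⁻¹ * (ρ * ((1 + ρ⁻¹)/2)) ^ n := by
    intro n
    have hc : ‖PowerSeries.coeff n (1+4*δ)‖ ≤ ρ ^ (n - N) := by
      rcases Nat.eq_zero_or_pos n with h0 | h0
      · subst h0
        rw [Nat.zero_sub, pow_zero]
        exact PadicInt.norm_le_one _
      · have : PowerSeries.coeff n (1+4*δ) = (4:ℤ_[2]) * PowerSeries.coeff n δ := by
          rw [map_add, PowerSeries.coeff_one, if_neg (by omega), zero_add, h4C,
            PowerSeries.coeff_C_mul]
        rw [this, norm_mul]
        calc ‖(4:ℤ_[2])‖ * ‖PowerSeries.coeff n δ‖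
            ≤ 1 * ‖PowerSeries.coeff n δ‖ :=
              mul_le_mul_of_nonneg_right (PadicInt.norm_le_one _) (norm_nonneg _)
          _ = ‖PowerSeries.coeff n δ‖ := one_mul _
          _ ≤ ρ ^ (n - N) := main n
    have hpow : ρ ^ (n - N) ≤ (ρ^N)⁻¹ * ρ^n := by
      have hmul : ρ^(n-N) * ρ^N ≤ ρ^n := by
        rw [← pow_add]
        apply pow_le_pow_of_le_one hρ0.le hρ1.le
        omega
      rw [inv_mul_eq_div, le_div_iff₀ (by positivity : (0:ℝ) < ρ^N)]
      exact hmul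
    calc ‖PowerSeries.coeff n (1+4*δ)‖ * ((1 + ρ⁻¹)/2) ^ n
        ≤ ρ ^ (n - N) * ((1 + ρ⁻¹)/2) ^ n :=
          mul_le_mul_of_nonneg_right hc (by positivity)
      _ ≤ ((ρ^N)⁻¹ * ρ^n) * ((1 + ρ⁻¹)/2) ^ n :=
          mul_le_mul_of_nonneg_right hpow (by positivity)
      _ = (ρ^N)⁻¹ * (ρ * ((1 + ρ⁻¹)/2)) ^ n := by
          rw [mul_pow]; ring
  have htend : Filter.Tendsto (fun n => (ρ^N)⁻¹ * (ρ * ((1 + ρ⁻¹)/2)) ^ n)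
      Filter.atTop (nhds 0) := by
    have := tendsto_pow_atTop_nhds_zero_of_lt_one hmix0 hmix
    simpa using this.const_mul ((ρ^N)⁻¹)
  exact squeeze_zero (fun n => mul_nonneg (norm_nonneg _) (by positivity)) hbound htend

lemma key : ∀ q : ℕ, 1 ≤ q → ∀ δ : PowerSeries ℤ_[2], PowerSeries.constantCoeff δ = 0 →
    (∃ r : ℝ, 1 < r ∧ Filter.Tendsto (fun n => ‖PowerSeries.coeff n ((1+4*δ)^q)‖ * r^n)
      Filter.atTop (nhds 0)) →
    ∃ r : ℝ, 1 < r ∧ Filter.Tendsto (fun n => ‖PowerSeries.coeff n (1+4*δ)‖ * r^n)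
      Filter.atTop (nhds 0) := by
  intro q
  induction q using Nat.strong_induction_on with
  | _ q IH =>
  intro hq δ hδ0 hex
  obtain ⟨r, hr, h⟩ := hex
  rcases Nat.even_or_odd q with he | ho
  · -- even case
    obtain ⟨m, hm⟩ := he
    have hm1 : 1 ≤ m := by omega
    set δ' : PowerSeries ℤ_[2] :=
      ∑ k ∈ Finset.Ico 1 (m+1),
        PowerSeries.C (R := ℤ_[2]) ((4:ℤ_[2])^(k-1) * (m.choose k : ℤ_[2])) * δ^k with hδ'
    have h1 : (1 + 4*δ)^m = 1 + 4*δ' := by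
      rw [expand δ m hm1, hδ', Finset.mul_sum]
      congr 1
      apply Finset.sum_congr rfl
      intro k hk
      rw [Finset.mem_Ico] at hk
      obtain ⟨j, rfl⟩ : ∃ j, k = j + 1 := ⟨k-1, by omega⟩
      rw [h4C, ← mul_assoc, ← map_mul]
      congr 1
      rw [Nat.add_sub_cancel]
      ring
    have h2 : PowerSeries.constantCoeff δ' = 0 := by
      rw [hδ', map_sum]
      apply Finset.sum_eq_zero
      intro k hk
      rw [Finset.mem_Ico] at hk
      rw [map_mul, map_pow, hδ0, zero_pow (by omega), mul_zero]
    have h3 : (1+4*δ)^q = (1+4*δ')^2 := by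
      rw [← h1, ← pow_mul]
      congr 1
      omega
    rw [h3] at h
    have hn2 : (2:ℝ)⁻¹ ≤ ‖((2:ℕ) : ℤ_[2])‖ := by
      rw [show (((2:ℕ)):ℤ_[2]) = (2:ℤ_[2]) by push_cast; ring, norm_two']
    obtain ⟨r', hr', h'⟩ := core δ' h2 2 (by norm_num) hn2 hr h
    rw [← h1] at h'
    exact IH m (by omega) hm1 δ hδ0 ⟨r', hr', h'⟩
  · -- odd case
    have hqn : (2:ℝ)⁻¹ ≤ ‖(q : ℤ_[2])‖ := by
      have hdvd : ¬ ((2:ℤ) ∣ (q:ℤ)) := by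
        rcases ho with ⟨c, hc⟩
        omega
      by_contra hlt
      push_neg at hlt
      have hlt1 : ‖(q : ℤ_[2])‖ < 1 := lt_of_lt_of_le hlt (by norm_num)
      rw [show ((q:ℤ_[2])) = (((q:ℤ)):ℤ_[2]) by push_cast; ring] at hlt1
      exact hdvd ((PadicInt.norm_int_lt_one_iff_dvd _).mp hlt1)
    exact core δ hδ0 q hq hqn hr h

theorem stmt_8 (δ : PowerSeries ℤ_[2]) (hδ : PowerSeries.constantCoeff δ = 0)
    (s : PowerSeries ℤ_[2]) (hs : s = 1 + 4 * δ)
    (hrad : ¬ ∃ r : ℝ, 1 < r ∧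
      Filter.Tendsto (fun n => ‖PowerSeries.coeff n s‖ * r ^ n) Filter.atTop (nhds 0)) :
    ∀ q : ℕ, 1 ≤ q → ¬ ∃ r : ℝ, 1 < r ∧
      Filter.Tendsto (fun n => ‖PowerSeries.coeff n (s ^ q)‖ * r ^ n)
        Filter.atTop (nhds 0) := by
  intro q hq hex
  subst hs
  exact hrad (key q hq δ hδ hex)
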